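/- Let X be a mild M-set and Y ⊆ X an M-subset (closed under the M-action). Then the complement X \ Y is also closed under the M-action. -/
import Mathlib


/-- The monoid of injective self-maps of ω (modelled as ℕ), under composition. -/
def M : Submonoid (Function.End ℕ) where
  carrier := {f | Function.Injective f}
  mul_mem' := fun hf hg => hf.comp hg
  one_mem' := fun _ _ h => h

/-- `x` is supported on `A` if it is fixed by every injection fixing `A` pointwise. -/
def Supported {X : Type*} [MulAction M X] (A : Set ℕ) (x : X) : Prop :=
  ∀ u : M, (∀ a ∈ A, u.1 a = a) → u • x = x

theorem stmt_12 {X : Type*} [MulAction M X]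
    (hmild : ∀ x : X, ∃ A : Set ℕ, (Aᶜ : Set ℕ).Infinite ∧ Supported A x)
    (Y : Set X) (hY : ∀ (f : M), ∀ y ∈ Y, f • y ∈ Y) :
    ∀ (f : M), ∀ x ∈ Yᶜ, f • x ∈ Yᶜ := by
  classical
  intro f x hx hfx
  obtain ⟨A, hAc, hsupp⟩ := hmild x
  have hfinj : Function.Injective f.1 := f.2
  let e := hAc.natEmbedding
  set g : ℕ → ℕ := fun n => if n ∈ f.1 '' A then Function.invFun f.1 n else (e n).1 with hgdef
  have hginA : ∀ a ∈ A, g (f.1 a) = a := by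
    intro a ha
    have hmem : f.1 a ∈ f.1 '' A := ⟨a, ha, rfl⟩
    simp only [hgdef, if_pos hmem]
    exact Function.leftInverse_invFun hfinj a
  have hginj : Function.Injective g := by
    intro m n hmn
    by_cases hm : m ∈ f.1 '' A <;> by_cases hn : n ∈ f.1 '' A
    · obtain ⟨a, ha, rfl⟩ := hm
      obtain ⟨b, hb, rfl⟩ := hn
      rw [hginA a ha, hginA b hb] at hmn
      exact congrArg f.1 hmn
    · obtain ⟨a, ha, rfl⟩ := hm
      rw [hginA a ha] at hmn
      have hge : g n = (e n).1 := by simp only [hgdef, if_neg hn]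
      rw [hge] at hmn
      exact absurd (hmn ▸ ha) (e n).2
    · obtain ⟨b, hb, rfl⟩ := hn
      rw [hginA b hb] at hmn
      have hge : g m = (e m).1 := by simp only [hgdef, if_neg hm]
      rw [hge] at hmn
      exact absurd (hmn ▸ hb) (e m).2
    · have h1 : g m = (e m).1 := by simp only [hgdef, if_neg hm]
      have h2 : g n = (e n).1 := by simp only [hgdef, if_neg hn]
      rw [h1, h2] at hmn
      exact e.injective (Subtype.ext hmn)
  let gM : M := ⟨g, hginj⟩
  have hfix : (gM * f) • x = x := hsupp (gM * f) (fun a ha => hginA a ha)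
  rw [mul_smul] at hfix
  have : f • x ∈ Y := hfx
  have hxy : gM • (f • x) ∈ Y := hY gM _ this
  rw [hfix] at hxy
  exact hx hxy
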